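/- Let C be m×(n+d) and Σ be (n+d)×(n+d) symmetric positive semidefinite such that CᵀC + Σ is positive definite (a definite pencil), and let X be an (n+d)×d matrix of rank d. Then the constraints Δ(I − P_Σ) = 0 and (C − Δ)X = 0 are compatible if and only if the d×d matrix XᵀΣX is nonsingular. -/

import Mathlib

open Matrix

/-- P is the Moore–Penrose pseudoinverse of M (the four Penrose conditions). -/
def IsMoorePenrose {a b : ℕ} (M : Matrix (Fin a) (Fin b) ℝ) (P : Matrix (Fin b) (Fin a) ℝ) :
    Prop :=
  M * P * M = M ∧ P * M * P = P ∧ (M * P)ᵀ = M * P ∧ (P * M)ᵀ = P * M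

/-- Column space of a matrix. -/
def colSpace {a b : ℕ} (M : Matrix (Fin a) (Fin b) ℝ) : Submodule ℝ (Fin a → ℝ) :=
  LinearMap.range M.mulVecLin

/-- For a definite pencil (CᵀC + Σ positive definite) and X of full column rank d,
the constraints Δ(I − P_Σ) = 0 and (C − Δ)X = 0 are compatible iff XᵀΣX is nonsingular. -/
theorem tls_constraints_compatible_iff_nonsingular {m n d : ℕ}
    (C : Matrix (Fin m) (Fin (n + d)) ℝ)
    (Sg : Matrix (Fin (n + d)) (Fin (n + d)) ℝ) (hSg : Sg.PosSemidef)
    (Sp : Matrix (Fin (n + d)) (Fin (n + d)) ℝ) (hSp : IsMoorePenrose Sg Sp)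
    (hdef : (Cᵀ * C + Sg).PosDef)
    (X : Matrix (Fin (n + d)) (Fin d) ℝ) (hX : X.rank = d) :
    (∃ Δ : Matrix (Fin m) (Fin (n + d)) ℝ,
        Δ * (1 - Sg * Sp) = 0 ∧ (C - Δ) * X = 0) ↔
      IsUnit (Xᵀ * Sg * X).det := by
  obtain ⟨hp1, hp2, hp3, hp4⟩ := hSp
  have hSgT : Sgᵀ = Sg := hSg.1
  -- key identity: Sg * (Sg * Sp) = Sg
  have h4 : Sg * Spᵀ * Sg = Sg := by
    have h := congrArg transpose hp1
    rw [transpose_mul, transpose_mul, hSgT, ← Matrix.mul_assoc] at h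
    exact h
  have hkey : Sg * (Sg * Sp) = Sg := by
    calc Sg * (Sg * Sp) = Sg * (Sg * Sp)ᵀ := by rw [hp3]
    _ = Sg * Spᵀ * Sg := by rw [transpose_mul, hSgT, Matrix.mul_assoc]
    _ = Sg := h4
  -- injectivity of X's mulVec from full rank
  have hXinj : Function.Injective X.mulVec := by
    rw [← Matrix.coe_mulVecLin, ← LinearMap.ker_eq_bot]
    have h1 := X.mulVecLin.finrank_range_add_finrank_ker
    rw [show (Module.finrank ℝ (LinearMap.range X.mulVecLin)) = X.rank from rfl, hX,
      Module.finrank_pi] at h1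
    simp only [Fintype.card_fin] at h1
    have : Module.finrank ℝ (LinearMap.ker X.mulVecLin) = 0 := by omega
    exact Submodule.finrank_eq_zero.mp this
  constructor
  · rintro ⟨Δ, h1, h2⟩
    have hΔ : Δ = Δ * (Sg * Sp) := by
      rw [Matrix.mul_sub, Matrix.mul_one, sub_eq_zero] at h1
      exact h1
    have hCX : C * X = Δ * X := by
      rw [Matrix.sub_mul, sub_eq_zero] at h2
      exact h2
    rw [isUnit_iff_ne_zero]
    intro hdet
    obtain ⟨v, hv0, hvmul⟩ := (Matrix.exists_mulVec_eq_zero_iff).mpr hdet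
    -- Sg *ᵥ (X *ᵥ v) = 0
    have hq : Sg *ᵥ (X *ᵥ v) = 0 := by
      have hd : (X *ᵥ v) ⬝ᵥ (Sg *ᵥ (X *ᵥ v)) = 0 := by
        have hm : Xᵀ *ᵥ (Sg *ᵥ (X *ᵥ v)) = 0 := by
          rw [Matrix.mulVec_mulVec, Matrix.mulVec_mulVec]
          exact hvmul
        calc (X *ᵥ v) ⬝ᵥ (Sg *ᵥ (X *ᵥ v))
            = (v ᵥ* Xᵀ) ⬝ᵥ (Sg *ᵥ (X *ᵥ v)) := by rw [vecMul_transpose]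
        _ = v ⬝ᵥ (Xᵀ *ᵥ (Sg *ᵥ (X *ᵥ v))) := (dotProduct_mulVec v Xᵀ _).symm
        _ = 0 := by rw [hm, dotProduct_zero]
      exact (hSg.dotProduct_mulVec_zero_iff (X *ᵥ v)).mp (by simpa using hd)
    -- (Sg * Sp) *ᵥ (X *ᵥ v) = 0
    have hSgSp : (Sg * Sp) *ᵥ (X *ᵥ v) = 0 := by
      have hsym : Sg * Sp = Spᵀ * Sg := by
        conv_lhs => rw [← hp3]
        rw [transpose_mul, hSgT]
      rw [hsym, ← Matrix.mulVec_mulVec, hq, mulVec_zero]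
    -- C *ᵥ (X *ᵥ v) = 0
    have hC : C *ᵥ (X *ᵥ v) = 0 := by
      calc C *ᵥ (X *ᵥ v) = (C * X) *ᵥ v := by rw [Matrix.mulVec_mulVec]
      _ = (Δ * (Sg * Sp) * X) *ᵥ v := by rw [hCX, ← hΔ]
      _ = Δ *ᵥ ((Sg * Sp) *ᵥ (X *ᵥ v)) := by
          rw [Matrix.mulVec_mulVec, Matrix.mulVec_mulVec, Matrix.mul_assoc]
      _ = 0 := by rw [hSgSp, mulVec_zero]
    -- conclude X *ᵥ v = 0 from positive definiteness
    have hw : X *ᵥ v = 0 := by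
      by_contra hne
      have hpos := hdef.dotProduct_mulVec_pos hne
      have hdot : (X *ᵥ v) ⬝ᵥ ((Cᵀ * C + Sg) *ᵥ (X *ᵥ v)) = 0 := by
        rw [add_mulVec, dotProduct_add, ← Matrix.mulVec_mulVec, hC, mulVec_zero,
          dotProduct_zero, hq, dotProduct_zero, add_zero]
      simp only [star_trivial] at hpos
      rw [hdot] at hpos
      exact lt_irrefl 0 hpos
    exact hv0 (hXinj (by rw [hw, Matrix.mulVec_zero]))
  · intro hdet
    refine ⟨C * X * (Xᵀ * Sg * X)⁻¹ * (Xᵀ * Sg), ?_, ?_⟩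
    · have h0 : (Xᵀ * Sg) * (1 - Sg * Sp) = 0 := by
        rw [Matrix.mul_sub, Matrix.mul_one, Matrix.mul_assoc Xᵀ Sg (Sg * Sp), hkey]
        simp
      rw [Matrix.mul_assoc, h0, Matrix.mul_zero]
    · rw [Matrix.sub_mul, sub_eq_zero, Matrix.mul_assoc (C * X * (Xᵀ * Sg * X)⁻¹),
        Matrix.mul_assoc Xᵀ, ← Matrix.mul_assoc Xᵀ, Matrix.mul_assoc _ (Xᵀ * Sg * X)⁻¹,
        Matrix.nonsing_inv_mul _ hdet, Matrix.mul_one]
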